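/- Let c ∈ ℝ, N > 0, and suppose for μ-a.e. v in a measure space (V, μ) we are given a positive measurable function h_v : (0, T) → ℝ such that h_v/s_{c/N} is non-increasing on (0, T), where T > 0 satisfies T ≤ π√(N/c) if c > 0. Then for all 0 < r ≤ R ≤ 1, (∫_V ∫₀^{rT} h_v(t)^N dt dμ(v)) / (∫_V ∫₀^{RT} h_v(t)^N dt dμ(v)) ≥ (∫₀^{rT} s_{c/N}(t)^N dt) / (∫₀^{RT} s_{c/N}(t)^N dt), provided all integrals are finite and positive. -/
import Mathlib


open Real MeasureTheory Set

/-- The comparison function `s_κ`: solution of `f'' + κ f = 0`, `f 0 = 0`, `f' 0 = 1`. -/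
noncomputable def sk (κ t : ℝ) : ℝ :=
  if 0 < κ then Real.sin (Real.sqrt κ * t) / Real.sqrt κ
  else if κ = 0 then t
  else Real.sinh (Real.sqrt (-κ) * t) / Real.sqrt (-κ)

lemma sk_continuous (κ : ℝ) : Continuous (sk κ) := by
  unfold sk
  split_ifs with h1 h2
  · fun_prop
  · fun_prop
  · fun_prop

lemma skN_continuous (κ N : ℝ) (hN : 0 < N) : Continuous fun t => sk κ t ^ N := by
  rw [continuous_iff_continuousAt]
  intro t
  exact (Real.continuousAt_rpow_const _ _ (Or.inr hN.le)).comp (sk_continuous κ).continuousAt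

lemma sk_pos (c N T : ℝ) (hN : 0 < N) (hTc : 0 < c → T ≤ Real.pi * Real.sqrt (N / c))
    (t : ℝ) (ht : t ∈ Set.Ioo 0 T) : 0 < sk (c / N) t := by
  obtain ⟨ht0, htT⟩ := ht
  unfold sk
  rcases lt_trichotomy c 0 with hc | hc | hc
  · have hκ : c / N < 0 := div_neg_of_neg_of_pos hc hN
    rw [if_neg (by linarith), if_neg (by linarith)]
    have h1 : 0 < Real.sqrt (-(c / N)) := Real.sqrt_pos.2 (by linarith)
    exact div_pos (Real.sinh_pos_iff.2 (by positivity)) h1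
  · simp only [hc, zero_div, lt_irrefl, if_false, if_pos rfl]
    exact ht0
  · have hκ : 0 < c / N := div_pos hc hN
    rw [if_pos hκ]
    have hs : 0 < Real.sqrt (c / N) := Real.sqrt_pos.2 hκ
    apply div_pos _ hs
    apply Real.sin_pos_of_pos_of_lt_pi (by positivity)
    have hone : Real.sqrt (c / N) * Real.sqrt (N / c) = 1 := by
      rw [← Real.sqrt_mul hκ.le]
      rw [show c / N * (N / c) = 1 by field_simp]
      exact Real.sqrt_one
    calc Real.sqrt (c / N) * t < Real.sqrt (c / N) * T := by
          exact mul_lt_mul_of_pos_left htT hs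
      _ ≤ Real.sqrt (c / N) * (Real.pi * Real.sqrt (N / c)) :=
          mul_le_mul_of_nonneg_left (hTc hc) hs.le
      _ = Real.pi * (Real.sqrt (c / N) * Real.sqrt (N / c)) := by ring
      _ = Real.pi := by rw [hone, mul_one]

lemma ae_Ioc_of_Ioo {a b : ℝ} {p : ℝ → Prop} (h : ∀ t ∈ Set.Ioo a b, p t) :
    ∀ᵐ t ∂(volume.restrict (Set.Ioc a b)), p t := by
  rw [← Measure.restrict_congr_set Ioo_ae_eq_Ioc]
  exact (ae_restrict_mem measurableSet_Ioo).mono h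

lemma gromov_key (f g : ℝ → ℝ) (a b C : ℝ) (ha : 0 < a) (hab : a ≤ b) (hC : 0 ≤ C)
    (hg0 : ∀ᵐ t ∂(volume.restrict (Set.Ioc 0 b)), 0 ≤ g t)
    (h1 : ∀ᵐ t ∂(volume.restrict (Set.Ioc 0 a)), C * g t ≤ f t)
    (h2 : ∀ᵐ t ∂(volume.restrict (Set.Ioc a b)), f t ≤ C * g t)
    (hf : IntervalIntegrable f volume 0 b)
    (hg : IntervalIntegrable g volume 0 b) :
    (∫ t in (0:ℝ)..b, f t) * ∫ t in (0:ℝ)..a, g t ≤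
      (∫ t in (0:ℝ)..a, f t) * ∫ t in (0:ℝ)..b, g t := by
  have h0a : (0:ℝ) ≤ a := ha.le
  have h0b : (0:ℝ) ≤ b := ha.le.trans hab
  have hsub1 : Set.uIcc (0:ℝ) a ⊆ Set.uIcc (0:ℝ) b := by
    rw [Set.uIcc_of_le h0a, Set.uIcc_of_le h0b]; exact Set.Icc_subset_Icc le_rfl hab
  have hsub2 : Set.uIcc a b ⊆ Set.uIcc (0:ℝ) b := by
    rw [Set.uIcc_of_le hab, Set.uIcc_of_le h0b]; exact Set.Icc_subset_Icc h0a le_rfl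
  have hf1 := hf.mono_set hsub1
  have hf2 := hf.mono_set hsub2
  have hg1 := hg.mono_set hsub1
  have hg2 := hg.mono_set hsub2
  have Hf1 : IntegrableOn f (Set.Ioc 0 a) volume := hf1.1
  have Hf2 : IntegrableOn f (Set.Ioc a b) volume := hf2.1
  have Hg1 : IntegrableOn g (Set.Ioc 0 a) volume := hg1.1
  have Hg2 : IntegrableOn g (Set.Ioc a b) volume := hg2.1
  have hg01 : ∀ᵐ t ∂(volume.restrict (Set.Ioc 0 a)), 0 ≤ g t :=
    ae_restrict_of_ae_restrict_of_subset (Set.Ioc_subset_Ioc le_rfl hab) hg0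
  have hg02 : ∀ᵐ t ∂(volume.restrict (Set.Ioc a b)), 0 ≤ g t :=
    ae_restrict_of_ae_restrict_of_subset (Set.Ioc_subset_Ioc h0a le_rfl) hg0
  have G1n : 0 ≤ ∫ t in (0:ℝ)..a, g t := by
    rw [intervalIntegral.integral_of_le h0a]
    exact integral_nonneg_of_ae hg01
  have G2n : 0 ≤ ∫ t in a..b, g t := by
    rw [intervalIntegral.integral_of_le hab]
    exact integral_nonneg_of_ae hg02
  have hA1 : C * ∫ t in (0:ℝ)..a, g t ≤ ∫ t in (0:ℝ)..a, f t := by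
    rw [intervalIntegral.integral_of_le h0a, intervalIntegral.integral_of_le h0a,
      ← integral_const_mul]
    exact integral_mono_ae (Hg1.const_mul C) Hf1 h1
  have hA2 : ∫ t in a..b, f t ≤ C * ∫ t in a..b, g t := by
    rw [intervalIntegral.integral_of_le hab, intervalIntegral.integral_of_le hab,
      ← integral_const_mul]
    exact integral_mono_ae Hf2 (Hg2.const_mul C) h2
  have eA : (∫ t in (0:ℝ)..b, f t) = (∫ t in (0:ℝ)..a, f t) + ∫ t in a..b, f t :=
    (intervalIntegral.integral_add_adjacent_intervals hf1 hf2).symm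
  have eG : (∫ t in (0:ℝ)..b, g t) = (∫ t in (0:ℝ)..a, g t) + ∫ t in a..b, g t :=
    (intervalIntegral.integral_add_adjacent_intervals hg1 hg2).symm
  rw [eA, eG]
  have k1 := mul_le_mul_of_nonneg_right hA2 G1n
  have k2 := mul_le_mul_of_nonneg_right hA1 G2n
  nlinarith [k1, k2]

/-- Integration step of the Bishop–Gromov theorem for SCLVs: fiberwise Gromov
lemma followed by integration over the directions. -/
theorem stmt_15 {V : Type*} [MeasurableSpace V] (μ : Measure V)
    (c N T : ℝ) (hN : 0 < N) (hT : 0 < T)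
    (hTc : 0 < c → T ≤ Real.pi * Real.sqrt (N / c))
    (h : V → ℝ → ℝ)
    (h_pos : ∀ᵐ v ∂μ, ∀ t ∈ Set.Ioo 0 T, 0 < h v t)
    (h_anti : ∀ᵐ v ∂μ, AntitoneOn (fun t => h v t / sk (c / N) t) (Set.Ioo 0 T))
    (h_int : ∀ r ∈ Set.Ioc (0:ℝ) 1,
      Integrable (fun v => ∫ t in (0:ℝ)..(r * T), h v t ^ N) μ)
    (h_int_t : ∀ᵐ v ∂μ, ∀ r ∈ Set.Ioc (0:ℝ) 1,
      IntervalIntegrable (fun t => h v t ^ N) volume 0 (r * T))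
    (h_den_pos : ∀ r ∈ Set.Ioc (0:ℝ) 1,
      0 < ∫ v, (∫ t in (0:ℝ)..(r * T), h v t ^ N) ∂μ)
    (h_model_pos : ∀ r ∈ Set.Ioc (0:ℝ) 1,
      0 < ∫ t in (0:ℝ)..(r * T), sk (c / N) t ^ N) :
    ∀ r R : ℝ, 0 < r → r ≤ R → R ≤ 1 →
      (∫ t in (0:ℝ)..(r * T), sk (c / N) t ^ N) /
        (∫ t in (0:ℝ)..(R * T), sk (c / N) t ^ N) ≤
      (∫ v, (∫ t in (0:ℝ)..(r * T), h v t ^ N) ∂μ) /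
        (∫ v, (∫ t in (0:ℝ)..(R * T), h v t ^ N) ∂μ) := by
  intro r R hr hrR hR1
  rcases lt_or_eq_of_le hrR with hrR' | hre
  case inr =>
    rw [hre]
    have hRmem : R ∈ Set.Ioc (0:ℝ) 1 := ⟨hre ▸ hr, hR1⟩
    rw [div_self (h_model_pos R hRmem).ne', div_self (h_den_pos R hRmem).ne']
  set κ := c / N with hκdef
  set a := r * T with hadef
  set b := R * T with hbdef
  have hR0 : 0 < R := hr.trans hrR'
  have ha0 : 0 < a := mul_pos hr hT
  have hab : a < b := by
    have : r * T < R * T := by nlinarith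
    simpa [hadef, hbdef] using this
  have hbT : b ≤ T := by
    have := mul_le_mul_of_nonneg_right hR1 hT.le
    simpa using this
  have haT : a < T := hab.trans_le hbT
  have haIoo : a ∈ Set.Ioo 0 T := ⟨ha0, haT⟩
  have rMem : r ∈ Set.Ioc (0:ℝ) 1 := ⟨hr, hrR'.le.trans hR1⟩
  have RMem : R ∈ Set.Ioc (0:ℝ) 1 := ⟨hR0, hR1⟩
  have hSb : 0 < ∫ t in (0:ℝ)..b, sk κ t ^ N := h_model_pos R RMem
  have hIb : 0 < ∫ v, (∫ t in (0:ℝ)..b, h v t ^ N) ∂μ := h_den_pos R RMem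
  have hskint : IntervalIntegrable (fun t => sk κ t ^ N) volume 0 b :=
    (skN_continuous κ N hN).intervalIntegrable 0 b
  -- fiberwise Gromov lemma
  have key_ae : ∀ᵐ v ∂μ,
      (∫ t in (0:ℝ)..a, sk κ t ^ N) * (∫ t in (0:ℝ)..b, h v t ^ N) ≤
      (∫ t in (0:ℝ)..b, sk κ t ^ N) * (∫ t in (0:ℝ)..a, h v t ^ N) := by
    filter_upwards [h_pos, h_anti, h_int_t] with v hp han hint
    have hha : 0 < h v a := hp a haIoo
    have hsa : 0 < sk κ a := sk_pos c N T hN hTc a haIoo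
    have hsaN : 0 < sk κ a ^ N := Real.rpow_pos_of_pos hsa N
    set C := h v a ^ N / sk κ a ^ N with hCdef
    have hC : 0 ≤ C := div_nonneg (Real.rpow_nonneg hha.le N) hsaN.le
    have main := gromov_key (fun t => h v t ^ N) (fun t => sk κ t ^ N) a b C ha0 hab.le hC
      (ae_Ioc_of_Ioo (fun t ht => Real.rpow_nonneg
        (sk_pos c N T hN hTc t ⟨ht.1, ht.2.trans_le hbT⟩).le N))
      (ae_Ioc_of_Ioo (fun t ht => by
        have htT : t ∈ Set.Ioo 0 T := ⟨ht.1, ht.2.trans haT⟩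
        have hst : 0 < sk κ t := sk_pos c N T hN hTc t htT
        have hstN : 0 < sk κ t ^ N := Real.rpow_pos_of_pos hst N
        have hht : 0 < h v t := hp t htT
        have hrat : h v a / sk κ a ≤ h v t / sk κ t := han htT haIoo ht.2.le
        have hpow : (h v a / sk κ a) ^ N ≤ (h v t / sk κ t) ^ N :=
          Real.rpow_le_rpow (div_nonneg hha.le hsa.le) hrat hN.le
        rw [Real.div_rpow hha.le hsa.le, Real.div_rpow hht.le hst.le] at hpow
        have := (div_le_div_iff₀ hsaN hstN).1 hpow
        rw [hCdef, div_mul_eq_mul_div, div_le_iff₀ hsaN]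
        linarith))
      (ae_Ioc_of_Ioo (fun t ht => by
        have htT : t ∈ Set.Ioo 0 T := ⟨ha0.trans ht.1, ht.2.trans_le hbT⟩
        have hst : 0 < sk κ t := sk_pos c N T hN hTc t htT
        have hstN : 0 < sk κ t ^ N := Real.rpow_pos_of_pos hst N
        have hht : 0 < h v t := hp t htT
        have hrat : h v t / sk κ t ≤ h v a / sk κ a := han haIoo htT ht.1.le
        have hpow : (h v t / sk κ t) ^ N ≤ (h v a / sk κ a) ^ N :=
          Real.rpow_le_rpow (div_nonneg hht.le hst.le) hrat hN.le
        rw [Real.div_rpow hha.le hsa.le, Real.div_rpow hht.le hst.le] at hpow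
        have := (div_le_div_iff₀ hstN hsaN).1 hpow
        rw [hCdef, div_mul_eq_mul_div, le_div_iff₀ hsaN]
        linarith))
      (hint R RMem) hskint
    calc (∫ t in (0:ℝ)..a, sk κ t ^ N) * (∫ t in (0:ℝ)..b, h v t ^ N)
        = (∫ t in (0:ℝ)..b, h v t ^ N) * (∫ t in (0:ℝ)..a, sk κ t ^ N) := mul_comm _ _
      _ ≤ (∫ t in (0:ℝ)..a, h v t ^ N) * (∫ t in (0:ℝ)..b, sk κ t ^ N) := main
      _ = (∫ t in (0:ℝ)..b, sk κ t ^ N) * (∫ t in (0:ℝ)..a, h v t ^ N) := mul_comm _ _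
  have step : ∫ v, (∫ t in (0:ℝ)..a, sk κ t ^ N) * (∫ t in (0:ℝ)..b, h v t ^ N) ∂μ ≤
      ∫ v, (∫ t in (0:ℝ)..b, sk κ t ^ N) * (∫ t in (0:ℝ)..a, h v t ^ N) ∂μ :=
    integral_mono_ae ((h_int R RMem).const_mul _) ((h_int r rMem).const_mul _) key_ae
  rw [integral_const_mul, integral_const_mul] at step
  rw [div_le_div_iff₀ hSb hIb]
  exact step.trans_eq (mul_comm _ _)
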